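/- For every integer k ≥ 2, det A^{(k−1)} = ((k−1)! (k−2)! ⋯ 2! · 1!)², i.e. the determinant of A^{(k−1)} equals the square of the product ∏_{j=1}^{k−1} j!. In particular det A^{(k−1)} ≠ 0. -/

import Mathlib

open Matrix Finset

lemma vandermonde_sq (i j n : ℕ) (hi : i < n) :
    ∑ m ∈ Finset.range n, i.choose m * j.choose m = (i + j).choose i := by
  have h1 : (i + j).choose i = ∑ p ∈ Finset.range (i + 1), i.choose p * j.choose (i - p) := by
    rw [Nat.add_choose_eq, Nat.sum_antidiagonal_eq_sum_range_succ_mk]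
  have h2 : ∑ p ∈ Finset.range (i + 1), i.choose p * j.choose (i - p)
      = ∑ m ∈ Finset.range (i + 1), i.choose m * j.choose m := by
    have hrefl := Finset.sum_range_reflect (fun p => i.choose p * j.choose (i - p)) (i + 1)
    rw [← hrefl]
    apply Finset.sum_congr rfl
    intro p hp
    have hp' : p ≤ i := by simpa [Nat.lt_succ_iff] using hp
    have e1 : i + 1 - 1 - p = i - p := by omega
    have e2 : i - (i - p) = p := by omega
    simp only [e1, e2]
    rw [Nat.choose_symm hp']
  have h3 : ∑ m ∈ Finset.range n, i.choose m * j.choose m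
      = ∑ m ∈ Finset.range (i + 1), i.choose m * j.choose m := by
    symm
    apply Finset.sum_subset
    · intro x hx
      simp only [Finset.mem_range] at *
      omega
    · intro x hx hx'
      simp only [Finset.mem_range] at *
      rw [Nat.choose_eq_zero_of_lt (by omega), zero_mul]
  rw [h3, ← h2, h1]

/-- For `k ≥ 2` (entries indexed `0, …, k-1` here, so the `(i,j)` entry
is `(-1)^{i+j}(i+j)!`): `det A^{(k-1)} = ((k-1)!(k-2)!⋯2!·1!)²`, and in particular
`det A^{(k-1)} ≠ 0`. -/
theorem det_A_eq_superfactorial_sq (k : ℕ) (hk : 2 ≤ k) :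
    letI A : Matrix (Fin k) (Fin k) ℝ :=
      fun i j => (-1 : ℝ) ^ (i.1 + j.1) * ((i.1 + j.1).factorial : ℝ)
    A.det = (∏ j ∈ Finset.Icc 1 (k - 1), (j.factorial : ℝ)) ^ 2 ∧ A.det ≠ 0 := by
  set A : Matrix (Fin k) (Fin k) ℝ :=
    fun i j => (-1 : ℝ) ^ (i.1 + j.1) * ((i.1 + j.1).factorial : ℝ) with hA
  set B : Matrix (Fin k) (Fin k) ℝ :=
    fun i m => (-1 : ℝ) ^ i.1 * (i.1.factorial : ℝ) * (i.1.choose m.1 : ℝ) with hB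
  have hAB : A = B * Bᵀ := by
    ext i j
    simp only [Matrix.mul_apply, Matrix.transpose_apply]
    simp only [hB, hA]
    have : ∀ m : Fin k,
        ((-1 : ℝ) ^ i.1 * (i.1.factorial : ℝ) * (i.1.choose m.1 : ℝ)) *
        ((-1 : ℝ) ^ j.1 * (j.1.factorial : ℝ) * (j.1.choose m.1 : ℝ))
        = ((-1 : ℝ) ^ (i.1 + j.1) * ((i.1.factorial : ℝ) * (j.1.factorial : ℝ))) *
          ((i.1.choose m.1 : ℝ) * (j.1.choose m.1 : ℝ)) := by
      intro m; rw [pow_add]; ring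
    rw [Finset.sum_congr rfl (fun m _ => this m), ← Finset.mul_sum]
    have hsum : ∑ m : Fin k, ((i.1.choose m.1 : ℝ) * (j.1.choose m.1 : ℝ))
        = ((i.1 + j.1).choose i.1 : ℝ) := by
      have := vandermonde_sq i.1 j.1 k i.2
      calc ∑ m : Fin k, ((i.1.choose m.1 : ℝ) * (j.1.choose m.1 : ℝ))
          = ∑ m ∈ Finset.range k, ((i.1.choose m : ℝ) * (j.1.choose m : ℝ)) := by
            rw [← Fin.sum_univ_eq_sum_range]
        _ = ((∑ m ∈ Finset.range k, i.1.choose m * j.1.choose m : ℕ) : ℝ) := by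
            push_cast; ring_nf
        _ = _ := by rw [this]
    rw [hsum]
    have hfac : (i.1 + j.1).choose i.1 * i.1.factorial * j.1.factorial
        = (i.1 + j.1).factorial := by
      have := Nat.choose_mul_factorial_mul_factorial (Nat.le_add_right i.1 j.1)
      simpa using this
    have : ((i.1.factorial : ℝ) * (j.1.factorial : ℝ)) * ((i.1 + j.1).choose i.1 : ℝ)
        = ((i.1 + j.1).factorial : ℝ) := by
      rw [← hfac]; push_cast; ring
    rw [mul_assoc, this]
  have hBtri : B.BlockTriangular OrderDual.toDual := by
    intro i j hij
    simp only [OrderDual.toDual_lt_toDual] at hij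
    simp only [hB]
    rw [Nat.choose_eq_zero_of_lt (by exact_mod_cast hij)]
    simp
  have hdetB : B.det = ∏ i : Fin k, ((-1 : ℝ) ^ i.1 * (i.1.factorial : ℝ)) := by
    rw [Matrix.det_of_lowerTriangular B hBtri]
    apply Finset.prod_congr rfl
    intro i _
    simp [hB, Nat.choose_self]
  have hdetA : A.det = (∏ i : Fin k, ((i.1.factorial : ℝ))) ^ 2 := by
    rw [hAB, Matrix.det_mul, Matrix.det_transpose, hdetB, ← Finset.prod_mul_distrib]
    rw [sq, ← Finset.prod_mul_distrib]
    apply Finset.prod_congr rfl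
    intro i _
    have : ((-1 : ℝ) ^ i.1) * ((-1 : ℝ) ^ i.1) = 1 := by
      rw [← pow_add, ← two_mul, pow_mul]; norm_num
    calc ((-1:ℝ) ^ i.1 * (i.1.factorial : ℝ)) * ((-1:ℝ) ^ i.1 * (i.1.factorial : ℝ))
        = ((-1:ℝ) ^ i.1 * (-1:ℝ) ^ i.1) * ((i.1.factorial : ℝ) * (i.1.factorial : ℝ)) := by ring
      _ = (i.1.factorial : ℝ) * (i.1.factorial : ℝ) := by rw [this, one_mul]
  have hprod : (∏ i : Fin k, ((i.1.factorial : ℝ)))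
      = ∏ j ∈ Finset.Icc 1 (k - 1), (j.factorial : ℝ) := by
    rw [Fin.prod_univ_eq_prod_range (fun i => ((i.factorial : ℝ)))]
    have h1 : Finset.range k = Finset.Ico 0 k := by rw [Finset.range_eq_Ico]
    have h2 : Finset.Icc 1 (k - 1) = Finset.Ico 1 k := by
      rw [← Finset.Ico_add_one_right_eq_Icc]
      congr 1
      omega
    rw [h1, h2, Finset.prod_eq_prod_Ico_succ_bot (by omega : 0 < k)]
    simp
  rw [hdetA, hprod]
  refine ⟨rfl, ?_⟩
  apply pow_ne_zero
  apply Finset.prod_ne_zero_iff.mpr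
  intro j _
  exact_mod_cast Nat.factorial_ne_zero j
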